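/- arXiv:2512.21321 — 2 statements merged into one kernel-verified Lean document; each statement's English description precedes it below -/
import Mathlib

section
/- Let p > 1, q ≥ 1, h ≥ 0 and a, b ∈ ℝ. Then there exists a constant C = C(p,q) > 0 such that (|b-a|^{p-2}(b-a))·((b-h)₊^q - (a-h)₊^q) ≥ C·|(b-h)₊^{(q-1+p)/p} - (a-h)₊^{(q-1+p)/p}|^p, where s₊ = max(s,0). -/
open Real

private lemma stepA {A B α : ℝ} (hA : 0 ≤ A) (hAB : A ≤ B) (hα : 1 ≤ α) :
    B ^ α - A ^ α ≤ α * (B - A) * B ^ (α - 1) := by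
  have hB : 0 ≤ B := hA.trans hAB
  rcases hB.eq_or_lt with h0 | hB
  · have hA0 : A = 0 := le_antisymm (h0 ▸ hAB) hA
    rw [← h0, hA0]; simp
  · set t : ℝ := A / B with ht
    have hs : -1 ≤ t - 1 := by
      have : 0 ≤ t := div_nonneg hA hB.le
      linarith
    have hbern : 1 + α * (t - 1) ≤ (1 + (t - 1)) ^ α :=
      one_add_mul_self_le_rpow_one_add hs hα
    rw [add_sub_cancel] at hbern
    have htα : t ^ α = A ^ α / B ^ α := Real.div_rpow hA hB.le α
    have hBα : 0 < B ^ α := Real.rpow_pos_of_pos hB _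
    have key : (1 + α * (t - 1)) * B ^ α ≤ A ^ α := by
      calc (1 + α * (t - 1)) * B ^ α ≤ t ^ α * B ^ α :=
            mul_le_mul_of_nonneg_right hbern hBα.le
        _ = A ^ α := by rw [htα]; field_simp
    have hB1 : B ^ (α - 1) * B = B ^ α := by
      rw [← Real.rpow_add_one hB.ne']; congr 1; ring
    have htB : (t - 1) * B = A - B := by rw [ht]; field_simp
    have h4 : (t - 1) * B ^ α = (A - B) * B ^ (α - 1) := by
      rw [← hB1, ← htB]; ring
    have key2 : B ^ α + α * ((A - B) * B ^ (α - 1)) ≤ A ^ α := by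
      calc B ^ α + α * ((A - B) * B ^ (α - 1)) = (1 + α * (t - 1)) * B ^ α := by
            rw [← h4]; ring
        _ ≤ A ^ α := key
    nlinarith [key2]

private lemma stepC {A B q : ℝ} (hA : 0 ≤ A) (hAB : A ≤ B) (hq : 1 ≤ q) :
    (B - A) * B ^ (q - 1) ≤ B ^ q - A ^ q := by
  have hB : 0 ≤ B := hA.trans hAB
  have hq0 : 0 < q := lt_of_lt_of_le one_pos hq
  rcases hB.eq_or_lt with hB0 | hB0
  · have hA0 : A = 0 := le_antisymm (hB0 ▸ hAB) hA
    rw [hA0, ← hB0, Real.zero_rpow hq0.ne']; simp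
  · have h2 : B ^ (q - 1) * B = B ^ q := by
      rw [← Real.rpow_add_one hB0.ne']; ring_nf
    rcases hA.eq_or_lt with h0 | hA0
    · rw [← h0, Real.zero_rpow hq0.ne', sub_zero, sub_zero, mul_comm, h2]
    · have h1 : A ^ (q - 1) * A = A ^ q := by
        rw [← Real.rpow_add_one hA0.ne']; ring_nf
      have h3 : A ^ (q - 1) ≤ B ^ (q - 1) :=
        Real.rpow_le_rpow hA hAB (by linarith)
      nlinarith [mul_le_mul_of_nonneg_right h3 hA0.le]

private lemma core (p q : ℝ) (hp : 1 < p) (hq : 1 ≤ q) {A B : ℝ} (hA : 0 ≤ A) (hAB : A ≤ B) :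
    (p / (q - 1 + p)) ^ p * (B ^ ((q - 1 + p) / p) - A ^ ((q - 1 + p) / p)) ^ p ≤
      (B - A) ^ (p - 1) * (B ^ q - A ^ q) := by
  have hB : 0 ≤ B := hA.trans hAB
  have hp0 : 0 < p := lt_trans one_pos hp
  set α : ℝ := (q - 1 + p) / p with hαdef
  have hαden : 0 < q - 1 + p := by linarith
  have hα1 : 1 ≤ α := by rw [hαdef, le_div_iff₀ hp0]; linarith
  have hα0 : 0 < α := lt_of_lt_of_le one_pos hα1
  have hBA : 0 ≤ B - A := sub_nonneg.2 hAB
  have hAineq := stepA hA hAB hα1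
  have hdiffnn : 0 ≤ B ^ α - A ^ α :=
    sub_nonneg.2 (Real.rpow_le_rpow hA hAB hα0.le)
  have hpow : (B ^ α - A ^ α) ^ p ≤ (α * (B - A) * B ^ (α - 1)) ^ p :=
    Real.rpow_le_rpow hdiffnn hAineq hp0.le
  have hexp : (α * (B - A) * B ^ (α - 1)) ^ p = α ^ p * (B - A) ^ p * B ^ (q - 1) := by
    rw [Real.mul_rpow (mul_nonneg hα0.le hBA) (Real.rpow_nonneg hB _),
        Real.mul_rpow hα0.le hBA, ← Real.rpow_mul hB]
    congr 1
    rw [hαdef]; field_simp; ring_nf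
  have hCα : (p / (q - 1 + p)) ^ p * α ^ p = 1 := by
    rw [← Real.mul_rpow (by positivity) hα0.le]
    have hone : p / (q - 1 + p) * α = 1 := by
      rw [hαdef]; field_simp
    rw [hone, Real.one_rpow]
  have h5 : (p / (q - 1 + p)) ^ p * (B ^ α - A ^ α) ^ p ≤ (B - A) ^ p * B ^ (q - 1) := by
    calc (p / (q - 1 + p)) ^ p * (B ^ α - A ^ α) ^ p
        ≤ (p / (q - 1 + p)) ^ p * (α ^ p * (B - A) ^ p * B ^ (q - 1)) := by
          apply mul_le_mul_of_nonneg_left (hexp ▸ hpow) (by positivity)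
      _ = ((p / (q - 1 + p)) ^ p * α ^ p) * ((B - A) ^ p * B ^ (q - 1)) := by ring
      _ = (B - A) ^ p * B ^ (q - 1) := by rw [hCα, one_mul]
  rcases hBA.eq_or_lt with hBA0 | hBA0
  · have hABeq : A = B := by linarith
    subst hABeq
    simp only [sub_self]
    rw [Real.zero_rpow hp0.ne', mul_zero]
    rw [Real.zero_rpow (by linarith : p - 1 ≠ 0)]
    simp
  · have h6 : (B - A) ^ p = (B - A) ^ (p - 1) * (B - A) := by
      rw [← Real.rpow_add_one hBA0.ne']; ring_nf
    have h7 : (B - A) ^ p * B ^ (q - 1) = (B - A) ^ (p - 1) * ((B - A) * B ^ (q - 1)) := by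
      rw [h6]; ring
    have h8 : (B - A) ^ (p - 1) * ((B - A) * B ^ (q - 1)) ≤ (B - A) ^ (p - 1) * (B ^ q - A ^ q) :=
      mul_le_mul_of_nonneg_left (stepC hA hAB hq) (Real.rpow_nonneg hBA _)
    calc (p / (q - 1 + p)) ^ p * (B ^ α - A ^ α) ^ p
        ≤ (B - A) ^ p * B ^ (q - 1) := h5
      _ = (B - A) ^ (p - 1) * ((B - A) * B ^ (q - 1)) := h7
      _ ≤ (B - A) ^ (p - 1) * (B ^ q - A ^ q) := h8

private lemma half (p q : ℝ) (hp : 1 < p) (hq : 1 ≤ q) (h a b : ℝ) (hh : 0 ≤ h)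
    (hab : a ≤ b) :
    (p / (q - 1 + p)) ^ p *
        |max (b - h) 0 ^ ((q - 1 + p) / p) - max (a - h) 0 ^ ((q - 1 + p) / p)| ^ p ≤
      |b - a| ^ (p - 2) * (b - a) * (max (b - h) 0 ^ q - max (a - h) 0 ^ q) := by
  have hp0 : 0 < p := lt_trans one_pos hp
  set A := max (a - h) 0 with hAdef
  set B := max (b - h) 0 with hBdef
  have hA : 0 ≤ A := le_max_right _ _
  have hAB : A ≤ B := max_le_max (by linarith) le_rfl
  have hB : 0 ≤ B := hA.trans hAB
  have hα0 : 0 < (q - 1 + p) / p := div_pos (by linarith) hp0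
  have habs : |B ^ ((q - 1 + p) / p) - A ^ ((q - 1 + p) / p)| =
      B ^ ((q - 1 + p) / p) - A ^ ((q - 1 + p) / p) :=
    abs_of_nonneg (sub_nonneg.2 (Real.rpow_le_rpow hA hAB hα0.le))
  rw [habs]
  rcases eq_or_lt_of_le hab with rfl | hab'
  · have : B = A := rfl
    rw [this]
    simp only [sub_self]
    rw [Real.zero_rpow hp0.ne']
    simp
  · have hba : 0 < b - a := by linarith
    have hBAba : B - A ≤ b - a := by
      have : B ≤ A + (b - a) := by
        apply max_le
        · have : b - h = (a - h) + (b - a) := by ring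
          rw [this]
          exact add_le_add (le_max_left _ _) le_rfl
        · have : (0:ℝ) ≤ A := hA
          linarith
      linarith
    have hBA : 0 ≤ B - A := sub_nonneg.2 hAB
    have hqdiff : 0 ≤ B ^ q - A ^ q :=
      sub_nonneg.2 (Real.rpow_le_rpow hA hAB (by linarith))
    have h9 : (B - A) ^ (p - 1) ≤ (b - a) ^ (p - 1) :=
      Real.rpow_le_rpow hBA hBAba (by linarith)
    have h10 : (B - A) ^ (p - 1) * (B ^ q - A ^ q) ≤ (b - a) ^ (p - 1) * (B ^ q - A ^ q) :=
      mul_le_mul_of_nonneg_right h9 hqdiff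
    have h11 : |b - a| ^ (p - 2) * (b - a) = (b - a) ^ (p - 1) := by
      rw [abs_of_pos hba, ← Real.rpow_add_one hba.ne']
      ring_nf
    rw [h11]
    exact le_trans (core p q hp hq hA hAB) h10

theorem stmt_11 (p q : ℝ) (hp : 1 < p) (hq : 1 ≤ q) :
    ∃ C > 0, ∀ h a b : ℝ, 0 ≤ h →
      C * |max (b - h) 0 ^ ((q - 1 + p) / p) - max (a - h) 0 ^ ((q - 1 + p) / p)| ^ p ≤
        |b - a| ^ (p - 2) * (b - a) * (max (b - h) 0 ^ q - max (a - h) 0 ^ q) := by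
  have hp0 : 0 < p := lt_trans one_pos hp
  have hαden : 0 < q - 1 + p := by linarith
  refine ⟨(p / (q - 1 + p)) ^ p, Real.rpow_pos_of_pos (by positivity) _, ?_⟩
  intro h a b hh
  rcases le_total a b with hab | hba
  · exact half p q hp hq h a b hh hab
  · have this := half p q hp hq h b a hh hba
    have e1 : |max (b - h) 0 ^ ((q - 1 + p) / p) - max (a - h) 0 ^ ((q - 1 + p) / p)| =
        |max (a - h) 0 ^ ((q - 1 + p) / p) - max (b - h) 0 ^ ((q - 1 + p) / p)| :=
      abs_sub_comm _ _
    have e2 : |b - a| = |a - b| := abs_sub_comm _ _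
    have e3 : |a - b| ^ (p - 2) * (b - a) * (max (b - h) 0 ^ q - max (a - h) 0 ^ q) =
        |a - b| ^ (p - 2) * (a - b) * (max (a - h) 0 ^ q - max (b - h) 0 ^ q) := by ring
    rw [e1, e2, e3]
    exact this
end

section
/- Let N > p ≥ 2 and λ = N(p-2)+p. Suppose ρ : V → (0,∞) satisfies ρ(x) ≤ d(x)^{-α} for d(x) ≥ 1 with α > p, and the graph satisfies μ(B(R)) ≤ C₁R^N. Then for ν > (N-p)(p-2)/(α-p) - p + 1, the sum ∑_{x∈V} ρ(x)^{N(p-1+ν)/(λ+pν)} m(x) is finite. -/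
theorem stmt_13 {V : Type*} (N p α ν C₁ : ℝ) (hp : 2 ≤ p) (hpN : p < N) (hα : p < α)
    (hν0 : 0 < ν) (hν : (N - p) * (p - 2) / (α - p) - p + 1 < ν)
    (d : V → ℕ) (m ρ : V → ℝ) (hm : ∀ x, 0 < m x) (hρ : ∀ x, 0 < ρ x)
    (hρd : ∀ x, 1 ≤ d x → ρ x ≤ (d x : ℝ) ^ (-α))
    (hfin : ∀ R : ℕ, {x : V | d x ≤ R}.Finite)
    (hvol : ∀ R : ℕ, 1 ≤ R → ∑ x ∈ (hfin R).toFinset, m x ≤ C₁ * (R : ℝ) ^ N) :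
    Summable (fun x : V => ρ x ^ (N * (p - 1 + ν) / (N * (p - 2) + p + p * ν)) * m x) := by
  classical
  set e : ℝ := N * (p - 1 + ν) / (N * (p - 2) + p + p * ν) with he_def
  have hN0 : (0:ℝ) < N := by linarith
  have hden : (0:ℝ) < N * (p - 2) + p + p * ν := by nlinarith
  have hnum : (0:ℝ) < N * (p - 1 + ν) := by nlinarith
  have he : 0 < e := div_pos hnum hden
  set β : ℝ := α * e with hβ_def
  have hαp : (0:ℝ) < α - p := by linarith
  have hkey : (N - p) * (p - 2) < (ν + p - 1) * (α - p) := by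
    have := (div_lt_iff₀ hαp).mp (by linarith : (N - p) * (p - 2) / (α - p) < ν + p - 1)
    linarith
  have hβN : N < β := by
    rw [hβ_def, he_def, ← mul_div_assoc, lt_div_iff₀ hden]
    have h1 : N * (p - 2) + p + p * ν < α * (p - 1 + ν) := by nlinarith
    nlinarith [mul_lt_mul_of_pos_left h1 hN0]
  have hβ0 : 0 < β := lt_trans hN0 hβN
  -- nonnegativity of terms
  set f : V → ℝ := fun x => ρ x ^ e * m x with hf_def
  have hf0 : ∀ x, 0 ≤ f x := fun x =>
    mul_nonneg (Real.rpow_nonneg (hρ x).le _) (hm x).le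
  -- C₁ nonneg
  have hC₁ : 0 ≤ C₁ := by
    have h := hvol 1 le_rfl
    have h0 : (0:ℝ) ≤ ∑ x ∈ (hfin 1).toFinset, m x :=
      Finset.sum_nonneg fun x _ => (hm x).le
    simpa [Real.one_rpow] using le_trans h0 h
  set r : ℝ := (2:ℝ) ^ (N - β) with hr_def
  have hr0 : 0 ≤ r := Real.rpow_nonneg (by norm_num) _
  have hr1 : r < 1 := Real.rpow_lt_one_of_one_lt_of_neg (by norm_num) (by linarith)
  set C : ℝ := C₁ * (2:ℝ) ^ N with hC_def
  have hC0 : 0 ≤ C := mul_nonneg hC₁ (Real.rpow_nonneg (by norm_num) _)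
  set c₀ : ℝ := ∑ x ∈ (hfin 1).toFinset, f x with hc₀_def
  -- block bound
  have hblock : ∀ k : ℕ,
      ∑ x ∈ (hfin (2 ^ (k + 1))).toFinset \ (hfin (2 ^ k)).toFinset, f x ≤ C * r ^ k := by
    intro k
    have h2k1 : (1:ℝ) ≤ ((2 ^ k : ℕ) : ℝ) := by
      exact_mod_cast Nat.one_le_two_pow
    have hb : ∀ x ∈ (hfin (2 ^ (k + 1))).toFinset \ (hfin (2 ^ k)).toFinset,
        f x ≤ ((2 ^ k : ℕ) : ℝ) ^ (-β) * m x := by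
      intro x hx
      simp only [Finset.mem_sdiff, Set.Finite.mem_toFinset, Set.mem_setOf_eq, not_le] at hx
      obtain ⟨hx1, hx2⟩ := hx
      have hd1 : 1 ≤ d x := le_trans Nat.one_le_two_pow (le_of_lt hx2)
      have hbd : ρ x ^ e ≤ ((2 ^ k : ℕ) : ℝ) ^ (-β) := by
        calc ρ x ^ e ≤ ((d x : ℝ) ^ (-α)) ^ e :=
              Real.rpow_le_rpow (hρ x).le (hρd x hd1) he.le
          _ = (d x : ℝ) ^ (-β) := by
              rw [← Real.rpow_mul (Nat.cast_nonneg _), neg_mul, hβ_def]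
          _ ≤ ((2 ^ k : ℕ) : ℝ) ^ (-β) := by
              apply Real.rpow_le_rpow_of_nonpos (by linarith) _ (by linarith)
              exact_mod_cast le_of_lt hx2
      exact mul_le_mul_of_nonneg_right hbd (hm x).le
    calc ∑ x ∈ (hfin (2 ^ (k + 1))).toFinset \ (hfin (2 ^ k)).toFinset, f x
        ≤ ∑ x ∈ (hfin (2 ^ (k + 1))).toFinset \ (hfin (2 ^ k)).toFinset,
            ((2 ^ k : ℕ) : ℝ) ^ (-β) * m x := Finset.sum_le_sum hb
      _ = ((2 ^ k : ℕ) : ℝ) ^ (-β) *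
            ∑ x ∈ (hfin (2 ^ (k + 1))).toFinset \ (hfin (2 ^ k)).toFinset, m x := by
            rw [Finset.mul_sum]
      _ ≤ ((2 ^ k : ℕ) : ℝ) ^ (-β) * (C₁ * ((2 ^ (k + 1) : ℕ) : ℝ) ^ N) := by
            apply mul_le_mul_of_nonneg_left _ (Real.rpow_nonneg (by positivity) _)
            refine le_trans (Finset.sum_le_sum_of_subset_of_nonneg
              Finset.sdiff_subset (fun x _ _ => (hm x).le)) ?_
            exact hvol _ Nat.one_le_two_pow
      _ = C * r ^ k := by
            push_cast
            rw [← Real.rpow_natCast (2:ℝ) k, ← Real.rpow_natCast (2:ℝ) (k+1),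
              ← Real.rpow_mul (by norm_num : (0:ℝ) ≤ 2),
              ← Real.rpow_mul (by norm_num : (0:ℝ) ≤ 2),
              hr_def, ← Real.rpow_natCast ((2:ℝ) ^ (N - β)) k,
              ← Real.rpow_mul (by norm_num : (0:ℝ) ≤ 2), hC_def]
            push_cast
            rw [mul_left_comm, ← Real.rpow_add (by norm_num : (0:ℝ) < 2),
              mul_assoc, ← Real.rpow_add (by norm_num : (0:ℝ) < 2)]
            congr 1
            ring
  -- telescoping bound on balls
  have hball : ∀ k : ℕ, ∑ x ∈ (hfin (2 ^ k)).toFinset, f x ≤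
      c₀ + C * ∑ i ∈ Finset.range k, r ^ i := by
    intro k
    induction k with
    | zero => simp [hc₀_def]
    | succ k ih =>
      have hsub : (hfin (2 ^ k)).toFinset ⊆ (hfin (2 ^ (k + 1))).toFinset := by
        intro x hx
        simp only [Set.Finite.mem_toFinset, Set.mem_setOf_eq] at hx ⊢
        exact le_trans hx (Nat.pow_le_pow_right (by norm_num) (Nat.le_succ k))
      calc ∑ x ∈ (hfin (2 ^ (k + 1))).toFinset, f x
          = (∑ x ∈ (hfin (2 ^ (k + 1))).toFinset \ (hfin (2 ^ k)).toFinset, f x)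
            + ∑ x ∈ (hfin (2 ^ k)).toFinset, f x := (Finset.sum_sdiff hsub).symm
        _ ≤ C * r ^ k + (c₀ + C * ∑ i ∈ Finset.range k, r ^ i) :=
            add_le_add (hblock k) ih
        _ = c₀ + C * ∑ i ∈ Finset.range (k + 1), r ^ i := by
            rw [Finset.sum_range_succ]; ring
  -- conclude
  apply summable_of_sum_le hf0 (c := c₀ + C * (1 - r)⁻¹)
  intro u
  set K : ℕ := u.sup d with hK_def
  have husub : u ⊆ (hfin (2 ^ K)).toFinset := by
    intro x hx
    simp only [Set.Finite.mem_toFinset, Set.mem_setOf_eq]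
    exact le_trans (Finset.le_sup hx) (Nat.le_of_lt (Nat.lt_two_pow_self (n := K)))
  calc ∑ x ∈ u, f x ≤ ∑ x ∈ (hfin (2 ^ K)).toFinset, f x :=
        Finset.sum_le_sum_of_subset_of_nonneg husub (fun x _ _ => hf0 x)
    _ ≤ c₀ + C * ∑ i ∈ Finset.range K, r ^ i := hball K
    _ ≤ c₀ + C * (1 - r)⁻¹ := by
        have := sum_le_hasSum (Finset.range K) (fun i _ => pow_nonneg hr0 i)
          (hasSum_geometric_of_lt_one hr0 hr1)
        exact add_le_add_right (mul_le_mul_of_nonneg_left this hC0) c₀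
end
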